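/- Let X be a nonempty complete metric space, H a separable complex Hilbert space, and for each A ∈ X let (T_A(t))_{t≥0} be a C₀-semigroup of contractions on H such that for every t ≥ 0 and x ∈ H the map X ∋ A ↦ T_A(t)x ∈ H is continuous. Suppose the set {A ∈ X : (T_A(t))_{t≥0} is exponentially stable} is dense in X. Then Y = {A ∈ X : (T_A(t))_{t≥0} is stable} is a dense G_δ subset of X. -/
import Mathlib


open Filter Topology

/-- `T` is a C₀-semigroup of contractions on the complex Hilbert space `H`. -/
def IsContractionC0Semigroup {H : Type*} [NormedAddCommGroup H] [InnerProductSpace ℂ H]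
    (T : ℝ → H →L[ℂ] H) : Prop :=
  T 0 = 1 ∧
  (∀ s t : ℝ, 0 ≤ s → 0 ≤ t → T (s + t) = T s ∘L T t) ∧
  (∀ t : ℝ, 0 ≤ t → ‖T t‖ ≤ 1) ∧
  (∀ x : H, ContinuousOn (fun t : ℝ => T t x) (Set.Ici 0))

/-- `T` is exponentially stable. -/
def IsExpStable {H : Type*} [NormedAddCommGroup H] [InnerProductSpace ℂ H]
    (T : ℝ → H →L[ℂ] H) : Prop :=
  ∃ C > (0 : ℝ), ∃ a > (0 : ℝ), ∀ t : ℝ, 0 ≤ t → ‖T t‖ ≤ C * Real.exp (-(t * a))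

/-- `T` is (strongly) stable: every orbit tends to `0`. -/
def IsStable {H : Type*} [NormedAddCommGroup H] [InnerProductSpace ℂ H]
    (T : ℝ → H →L[ℂ] H) : Prop :=
  ∀ x : H, Tendsto (fun t : ℝ => ‖T t x‖) atTop (𝓝 0)

/-- for a family of contraction `C₀`-semigroups on a separable complex
Hilbert space, depending strongly continuously on a parameter ranging in a nonempty
complete metric space `X`, if the exponentially stable parameters are dense in `X`
then the set of parameters whose semigroup is (strongly) stable is a dense `G_δ`
subset of `X`. -/
theorem stable_dense_Gδ
    {X : Type*} [MetricSpace X] [CompleteSpace X] [Nonempty X]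
    {H : Type*} [NormedAddCommGroup H] [InnerProductSpace ℂ H] [CompleteSpace H]
    [TopologicalSpace.SeparableSpace H]
    (T : X → ℝ → H →L[ℂ] H)
    (hsem : ∀ A : X, IsContractionC0Semigroup (T A))
    (hcont : ∀ t : ℝ, 0 ≤ t → ∀ y : H, Continuous fun A : X => T A t y)
    (hdense : Dense {A : X | IsExpStable (T A)}) :
    IsGδ {A : X | IsStable (T A)} ∧ Dense {A : X | IsStable (T A)} := by
  -- monotonicity of orbits
  have hmono : ∀ (A : X) (x : H) {s t : ℝ}, 0 ≤ s → s ≤ t →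
      ‖T A t x‖ ≤ ‖T A s x‖ := by
    intro A x s t hs hst
    obtain ⟨-, hadd, hcontr, -⟩ := hsem A
    have h : T A t = (T A (t - s)).comp (T A s) := by
      have h2 := hadd (t - s) s (by linarith) hs
      rwa [sub_add_cancel] at h2
    calc ‖T A t x‖ = ‖T A (t - s) (T A s x)‖ := by rw [h]; rfl
      _ ≤ ‖T A (t - s)‖ * ‖T A s x‖ := (T A (t - s)).le_opNorm _
      _ ≤ 1 * ‖T A s x‖ :=
          mul_le_mul_of_nonneg_right (hcontr _ (by linarith)) (norm_nonneg _)
      _ = ‖T A s x‖ := one_mul _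
  set Yx : H → Set X :=
    fun x => {A | Tendsto (fun t : ℝ => ‖T A t x‖) atTop (𝓝 0)} with hYxdef
  have hYx_eq : ∀ x : H, Yx x = ⋂ n : ℕ, ⋃ t : ℝ, ⋃ _ : 0 ≤ t,
      {A : X | ‖T A t x‖ < 1 / (n + 1)} := by
    intro x
    ext A
    simp only [hYxdef, Set.mem_iInter, Set.mem_iUnion, Set.mem_setOf_eq]
    constructor
    · intro hA n
      have hpos : (0 : ℝ) < 1 / (n + 1) := by positivity
      obtain ⟨t, hlt, ht0⟩ :=
        ((hA.eventually (gt_mem_nhds hpos)).and (eventually_ge_atTop 0)).exists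
      exact ⟨t, ht0, hlt⟩
    · intro hA
      rw [Metric.tendsto_atTop]
      intro ε hε
      obtain ⟨n, hn⟩ := exists_nat_one_div_lt hε
      obtain ⟨t₀, ht₀0, ht₀⟩ := hA n
      refine ⟨t₀, fun t ht => ?_⟩
      rw [Real.dist_eq, sub_zero, abs_of_nonneg (norm_nonneg _)]
      calc ‖T A t x‖ ≤ ‖T A t₀ x‖ := hmono A x ht₀0 ht
        _ < 1 / (n + 1) := ht₀
        _ < ε := hn
  have hYx_Gδ : ∀ x : H, IsGδ (Yx x) := by
    intro x
    rw [hYx_eq x]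
    refine IsGδ.iInter fun n => IsOpen.isGδ ?_
    refine isOpen_iUnion fun t => isOpen_iUnion fun ht => ?_
    exact isOpen_lt ((hcont t ht x).norm) continuous_const
  have hYx_dense : ∀ x : H, Dense (Yx x) := by
    intro x
    refine hdense.mono ?_
    intro A hA
    obtain ⟨C, hC, a, ha, hbd⟩ := hA
    have h1 : Tendsto (fun t : ℝ => C * Real.exp (-(t * a)) * ‖x‖) atTop (𝓝 0) := by
      have h2 : Tendsto (fun t : ℝ => -(t * a)) atTop atBot := by
        exact tendsto_neg_atTop_atBot.comp (tendsto_id.atTop_mul_const ha)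
      have h3 : Tendsto (fun t : ℝ => Real.exp (-(t * a))) atTop (𝓝 0) :=
        Real.tendsto_exp_atBot.comp h2
      have h4 := (h3.const_mul C).mul_const ‖x‖
      simpa using h4
    refine squeeze_zero' (Eventually.of_forall fun t => norm_nonneg _) ?_ h1
    filter_upwards [eventually_ge_atTop (0 : ℝ)] with t ht
    calc ‖T A t x‖ ≤ ‖T A t‖ * ‖x‖ := (T A t).le_opNorm x
      _ ≤ C * Real.exp (-(t * a)) * ‖x‖ :=
          mul_le_mul_of_nonneg_right (hbd t ht) (norm_nonneg x)
  obtain ⟨u, hu⟩ := TopologicalSpace.exists_dense_seq H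
  have hS : {A : X | IsStable (T A)} = ⋂ k : ℕ, Yx (u k) := by
    ext A
    simp only [hYxdef, Set.mem_iInter, Set.mem_setOf_eq, IsStable]
    constructor
    · intro hA k; exact hA (u k)
    · intro hA x
      rw [Metric.tendsto_atTop]
      intro ε hε
      obtain ⟨k, hk⟩ := hu.exists_dist_lt x (show (0 : ℝ) < ε / 2 by positivity)
      have hAk := hA k
      rw [Metric.tendsto_atTop] at hAk
      obtain ⟨N, hN⟩ := hAk (ε / 2) (by positivity)
      refine ⟨max N 0, fun t ht => ?_⟩
      have htN : t ≥ N := le_trans (le_max_left _ _) ht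
      have ht0 : (0 : ℝ) ≤ t := le_trans (le_max_right _ _) ht
      have h5 := hN t htN
      rw [Real.dist_eq, sub_zero, abs_of_nonneg (norm_nonneg _)] at h5 ⊢
      have hsplit : ‖T A t x‖ ≤ ‖T A t (x - u k)‖ + ‖T A t (u k)‖ := by
        have : T A t x = T A t (x - u k) + T A t (u k) := by
          rw [← map_add]; congr 1; abel
        rw [this]; exact norm_add_le _ _
      have h6 : ‖T A t (x - u k)‖ ≤ ‖x - u k‖ := by
        calc ‖T A t (x - u k)‖ ≤ ‖T A t‖ * ‖x - u k‖ := (T A t).le_opNorm _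
          _ ≤ 1 * ‖x - u k‖ :=
              mul_le_mul_of_nonneg_right ((hsem A).2.2.1 t ht0) (norm_nonneg _)
          _ = ‖x - u k‖ := one_mul _
      have h7 : ‖x - u k‖ < ε / 2 := by rwa [← dist_eq_norm]
      linarith
  rw [hS]
  exact ⟨IsGδ.iInter fun k => hYx_Gδ (u k),
    dense_iInter_of_Gδ (fun k => hYx_Gδ (u k)) (fun k => hYx_dense (u k))⟩
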